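/- Let 1 < p < ∞ and let r be a positive integer, and set k = 2^r − 1. For every real α with α < (k+1)^{1−1/p} there exists a matrix A ∈ ℝ^{(k+1)×(k+1)} such that inf{ ‖A − X‖_p : rank(X) ≤ k } > 0, and such that for every k-element tuple J of distinct column indices of A and every Y ∈ ℝ^{k×(k+1)}, ‖A − A_J Y‖_p ≥ α · inf{ ‖A − X‖_p : X ∈ ℝ^{(k+1)×(k+1)}, rank(X) ≤ k }. -/

import Mathlib

open Finset Matrix
set_option maxHeartbeats 1000000

/-- Entry-wise ℓp norm of a real matrix. -/
noncomputable def lpNorm {n m : ℕ} (p : ℝ) (A : Matrix (Fin n) (Fin m) ℝ) : ℝ :=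
  (∑ i, ∑ j, |A i j| ^ p) ^ (1 / p)

namespace CSSaux

/-- sign character on `Fin 2`. -/
def sgn2 : Fin 2 → ℝ := fun b => if b = 1 then -1 else 1

lemma sgn2_zero : sgn2 0 = 1 := rfl

lemma sgn2_abs (u : Fin 2) : |sgn2 u| = 1 := by fin_cases u <;> norm_num [sgn2]

lemma sgn2_mul_sgn2 (a b : Fin 2) : sgn2 a * sgn2 b = if a = b then 1 else -1 := by
  fin_cases a <;> fin_cases b <;> norm_num [sgn2]

/-- Sylvester-type Hadamard matrix transported through an equivalence. -/
noncomputable def Had {N R : ℕ} (e : Fin N ≃ (Fin R → Fin 2)) : Matrix (Fin N) (Fin N) ℝ :=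
  fun i j => ∏ t, sgn2 (e i t * e j t)

variable {N R : ℕ} (e : Fin N ≃ (Fin R → Fin 2))

lemma Had_abs (i j) : |Had e i j| = 1 := by
  rw [Had, Finset.abs_prod]
  simp [sgn2_abs]

lemma Had_symm (i j) : Had e i j = Had e j i := by
  simp [Had, mul_comm]

lemma Had_base_row (j) : Had e (e.symm 0) j = 1 := by
  simp [Had, sgn2_zero]

lemma Had_orth (j j') : ∑ i, Had e i j * Had e i j' = if j = j' then (N : ℝ) else 0 := by
  have hcard : (2 : ℕ) ^ R = N := by
    have := Fintype.card_congr e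
    simpa using this.symm
  have step1 : ∀ i, Had e i j * Had e i j'
      = ∏ t, (sgn2 (e i t * e j t) * sgn2 (e i t * e j' t)) := by
    intro i; rw [Had, Had, ← Finset.prod_mul_distrib]
  calc ∑ i, Had e i j * Had e i j'
      = ∑ i, ∏ t, (sgn2 (e i t * e j t) * sgn2 (e i t * e j' t)) := by
        simp only [step1]
    _ = ∑ x : Fin R → Fin 2, ∏ t, (sgn2 (x t * e j t) * sgn2 (x t * e j' t)) :=
        Equiv.sum_comp e (fun x => ∏ t, sgn2 (x t * e j t) * sgn2 (x t * e j' t))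
    _ = ∏ t, ∑ u : Fin 2, (sgn2 (u * e j t) * sgn2 (u * e j' t)) := by
        rw [Finset.prod_univ_sum (fun _ => Finset.univ)
          (fun t u => sgn2 (u * e j t) * sgn2 (u * e j' t)), Fintype.piFinset_univ]
    _ = ∏ t, (if e j t = e j' t then (2:ℝ) else 0) := by
        refine Finset.prod_congr rfl fun t _ => ?_
        rw [Fin.sum_univ_two]
        simp only [zero_mul, one_mul, sgn2_zero, one_mul, sgn2_mul_sgn2]
        split <;> norm_num
    _ = if j = j' then (N : ℝ) else 0 := by
        by_cases h : j = j'
        · subst h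
          simp only [if_pos rfl, Finset.prod_const, Finset.card_univ, Fintype.card_fin]
          rw [← hcard]
          push_cast
          ring
        · rw [if_neg h]
          have : ∃ t, e j t ≠ e j' t := by
            by_contra hc
            push_neg at hc
            exact h (e.injective (funext hc))
          obtain ⟨t, ht⟩ := this
          exact Finset.prod_eq_zero (mem_univ t) (if_neg ht)

lemma Had_orth_row (i i') : ∑ j, Had e i j * Had e i' j = if i = i' then (N : ℝ) else 0 := by
  calc ∑ j, Had e i j * Had e i' j = ∑ j, Had e j i * Had e j i' := by
        simp only [Had_symm e]
    _ = _ := Had_orth e i i'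

lemma exists_left_nullvec {k : ℕ} (X : Matrix (Fin (k+1)) (Fin (k+1)) ℝ) (hX : X.rank ≤ k) :
    ∃ z : Fin (k+1) → ℝ, z ≠ 0 ∧ ∀ j, ∑ i, z i * X i j = 0 := by
  have h1 : Xᵀ.rank ≤ k := by rwa [Matrix.rank_transpose]
  have h2 := LinearMap.finrank_range_add_finrank_ker (Xᵀ.mulVecLin)
  have h3 : Module.finrank ℝ (Fin (k+1) → ℝ) = k + 1 := by simp
  have hrk : Xᵀ.rank = Module.finrank ℝ (LinearMap.range Xᵀ.mulVecLin) := rfl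
  have hker : 0 < Module.finrank ℝ (LinearMap.ker Xᵀ.mulVecLin) := by omega
  obtain ⟨z, hz0⟩ := Module.finrank_pos_iff_exists_ne_zero.mp hker
  refine ⟨z, by simpa using hz0, fun j => ?_⟩
  have hm : Xᵀ.mulVec (z : Fin (k+1) → ℝ) = 0 := z.2
  have := congrFun hm j
  simpa [Matrix.mulVec, dotProduct, Matrix.transpose_apply, mul_comm] using this

lemma lpNorm_nonneg {n m : ℕ} (p : ℝ) (M : Matrix (Fin n) (Fin m) ℝ) : 0 ≤ lpNorm p M :=
  Real.rpow_nonneg (Finset.sum_nonneg fun _ _ => Finset.sum_nonneg fun _ _ =>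
    Real.rpow_nonneg (abs_nonneg _) _) _

lemma col_le_lpNorm {n m : ℕ} {p : ℝ} (hp0 : 0 < p) (M : Matrix (Fin n) (Fin m) ℝ) (j₀ : Fin m) :
    (∑ i, |M i j₀| ^ p) ^ (1/p) ≤ lpNorm p M := by
  apply Real.rpow_le_rpow (Finset.sum_nonneg fun _ _ => Real.rpow_nonneg (abs_nonneg _) _)
  · exact Finset.sum_le_sum fun i _ =>
      Finset.single_le_sum (fun j _ => Real.rpow_nonneg (abs_nonneg _) _) (mem_univ j₀)
  · positivity

lemma holder_abs {n : ℕ} {p q : ℝ} (hpq : p.HolderConjugate q) (u z : Fin n → ℝ) :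
    |∑ i, u i * z i| ≤ (∑ i, |u i| ^ p) ^ (1/p) * (∑ i, |z i| ^ q) ^ (1/q) := by
  have h1 := Real.inner_le_Lp_mul_Lq Finset.univ u z hpq
  have h2 := Real.inner_le_Lp_mul_Lq Finset.univ (fun i => -u i) z hpq
  simp only [neg_mul, Finset.sum_neg_distrib, abs_neg] at h2
  rw [abs_le]
  exact ⟨by linarith, h1⟩

end CSSaux

open CSSaux

theorem column_subset_selection_lower_bound
    (p : ℝ) (hp : 1 < p) (r : ℕ) (hr : 0 < r) (k : ℕ) (hk : k = 2 ^ r - 1)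
    (α : ℝ) (hα : α < ((k : ℝ) + 1) ^ (1 - 1 / p)) :
    ∃ A : Matrix (Fin (k + 1)) (Fin (k + 1)) ℝ,
      0 < sInf {c : ℝ | ∃ X : Matrix (Fin (k + 1)) (Fin (k + 1)) ℝ,
            X.rank ≤ k ∧ c = lpNorm p (A - X)} ∧
      ∀ (J : Fin k → Fin (k + 1)), Function.Injective J →
        ∀ Y : Matrix (Fin k) (Fin (k + 1)) ℝ,
          α * sInf {c : ℝ | ∃ X : Matrix (Fin (k + 1)) (Fin (k + 1)) ℝ,
              X.rank ≤ k ∧ c = lpNorm p (A - X)} ≤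
            lpNorm p (A - A.submatrix id J * Y) := by
  have hp0 : (0:ℝ) < p := lt_trans one_pos hp
  set q : ℝ := p / (p - 1) with hqdef
  have hpq : p.HolderConjugate q := (Real.holderConjugate_iff_eq_conjExponent hp).mpr hqdef
  have hq1 : 1 < q := hpq.symm.lt
  have hq0 : (0:ℝ) < q := lt_trans one_pos hq1
  have hn2 : k + 1 = 2 ^ r := by
    have : 1 ≤ 2 ^ r := Nat.one_le_two_pow
    omega
  have hk1 : 1 ≤ k := by
    have h2 : 2 ≤ 2 ^ r := by
      calc 2 = 2 ^ 1 := rfl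
        _ ≤ 2 ^ r := Nat.pow_le_pow_right (by norm_num) hr
    omega
  set nr : ℝ := (k : ℝ) + 1 with hnrdef
  have hkr0 : (0:ℝ) < (k:ℝ) := by exact_mod_cast hk1
  have hkne : (k:ℝ) ≠ 0 := hkr0.ne'
  have hnr0 : 0 < nr := by rw [hnrdef]; linarith
  -- choice of parameters
  set β₀ : ℝ := max α (nr ^ (1 - 1/p) / 2) with hβdef
  have hrpow_pos : 0 < nr ^ (1 - 1/p) := Real.rpow_pos_of_pos hnr0 _
  have hβpos : 0 < β₀ := lt_of_lt_of_le (by linarith) (le_max_right _ _)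
  have hβlt : β₀ < nr ^ (1 - 1/p) := max_lt hα (by linarith)
  have hαβ : α ≤ β₀ := le_max_left _ _
  set ρ : ℝ := nr ^ (1 - 1/p) / β₀ with hρdef
  have hρ1 : 1 < ρ := (one_lt_div hβpos).mpr hβlt
  have hρ0 : 0 < ρ := lt_trans one_pos hρ1
  have hρq1 : 1 < ρ ^ q :=
    (Real.one_lt_rpow_iff_of_pos hρ0).mpr (Or.inl ⟨hρ1, hq0⟩)
  set γ : ℝ := ((ρ ^ q - 1) / k) ^ (1/q) with hγdef
  have hbase_pos : 0 < (ρ ^ q - 1) / (k:ℝ) := div_pos (by linarith) hkr0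
  have hγ0 : 0 < γ := Real.rpow_pos_of_pos hbase_pos _
  have hγq : γ ^ q = (ρ ^ q - 1) / (k:ℝ) := by
    rw [hγdef, ← Real.rpow_mul hbase_pos.le, one_div, inv_mul_cancel₀ hq0.ne', Real.rpow_one]
  -- the matrix
  set e : Fin (k+1) ≃ (Fin r → Fin 2) := (finCongr hn2).trans finFunctionFinEquiv.symm with hedef
  set i₀ : Fin (k+1) := e.symm 0 with hi₀def
  set H : Matrix (Fin (k+1)) (Fin (k+1)) ℝ := Had e with hHdef
  have habsH : ∀ i j, |H i j| = 1 := fun i j => Had_abs e i j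
  have hH_base : ∀ j, H i₀ j = 1 := fun j => Had_base_row e j
  have hH_orth : ∀ j j', ∑ i, H i j * H i j' = if j = j' then nr else 0 := by
    intro j j'
    have := Had_orth e j j'
    rw [hnrdef]
    push_cast at this
    exact this
  have hH_orth_row : ∀ i i', ∑ j, H i j * H i' j = if i = i' then nr else 0 := by
    intro i i'
    have := Had_orth_row e i i'
    rw [hnrdef]
    push_cast at this
    exact this
  set d : Fin (k+1) → ℝ := fun i => if i = i₀ then γ else 1 with hddef
  have hd_pos : ∀ i, 0 < d i := by
    intro i; rw [hddef]; dsimp only; split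
    · exact hγ0
    · norm_num
  set γ₁ : ℝ := min γ 1 with hγ₁def
  have hγ₁0 : 0 < γ₁ := lt_min hγ0 one_pos
  have hd_ge : ∀ i, γ₁ ≤ d i := by
    intro i; rw [hddef, hγ₁def]; dsimp only; split
    · exact min_le_left _ _
    · exact min_le_right _ _
  set A : Matrix (Fin (k+1)) (Fin (k+1)) ℝ := fun i j => d i * H i j with hAdef
  set S : Set ℝ := {c : ℝ | ∃ X : Matrix (Fin (k + 1)) (Fin (k + 1)) ℝ,
      X.rank ≤ k ∧ c = lpNorm p (A - X)} with hSdef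
  -- upper bound element
  set X₀ : Matrix (Fin (k+1)) (Fin (k+1)) ℝ := fun i j => if i = i₀ then 0 else H i j with hX₀def
  have hX₀rank : X₀.rank ≤ k := by
    have hX₀eq : X₀ = Matrix.diagonal (fun i => if i = i₀ then (0:ℝ) else 1) * H := by
      ext i j
      rw [Matrix.diagonal_mul, hX₀def]
      dsimp only
      split <;> simp
    rw [hX₀eq]
    refine le_trans (Matrix.rank_mul_le_left _ _) ?_
    rw [Matrix.rank_diagonal]
    have hiff : ∀ i : Fin (k+1), ((if i = i₀ then (0:ℝ) else 1) ≠ 0) ↔ ¬(i = i₀) := by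
      intro i; split <;> simp_all
    rw [Fintype.card_congr (Equiv.subtypeEquivRight hiff)]
    rw [Fintype.card_subtype_compl, Fintype.card_subtype_eq, Fintype.card_fin]
    omega
  set C₂ : ℝ := (nr * γ ^ p) ^ (1/p) with hC₂def
  have hAX₀ : lpNorm p (A - X₀) = C₂ := by
    have entry : ∀ i j, |(A - X₀) i j| ^ p = if i = i₀ then γ ^ p else 0 := by
      intro i j
      rw [Matrix.sub_apply, hAdef, hX₀def]
      dsimp only
      by_cases h : i = i₀
      · subst h
        rw [if_pos rfl, if_pos rfl, hddef]
        dsimp only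
        rw [if_pos rfl, hH_base j, sub_zero, mul_one, abs_of_pos hγ0]
      · rw [if_neg h, if_neg h, hddef]
        dsimp only
        rw [if_neg h, one_mul, sub_self, abs_zero, Real.zero_rpow hp0.ne']
    rw [lpNorm, hC₂def]
    congr 1
    calc ∑ i, ∑ j, |(A - X₀) i j| ^ p
        = ∑ i, ∑ _j : Fin (k+1), (if i = i₀ then γ ^ p else 0) := by
          exact Finset.sum_congr rfl fun i _ => Finset.sum_congr rfl fun j _ => entry i j
      _ = ∑ _j : Fin (k+1), ∑ i, (if i = i₀ then γ ^ p else 0) := Finset.sum_comm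
      _ = ∑ _j : Fin (k+1), γ ^ p := by
          refine Finset.sum_congr rfl fun j _ => ?_
          rw [Finset.sum_ite_eq' Finset.univ i₀ (fun _ => γ ^ p), if_pos (Finset.mem_univ i₀)]
      _ = nr * γ ^ p := by
          rw [Finset.sum_const, Finset.card_univ, Fintype.card_fin, hnrdef]
          push_cast
          ring
  have hmem : C₂ ∈ S := ⟨X₀, hX₀rank, hAX₀.symm⟩
  have hbdd : BddBelow S := ⟨0, fun c hc => by
    obtain ⟨X, _, rfl⟩ := hc
    exact lpNorm_nonneg p _⟩
  have hSle : sInf S ≤ C₂ := csInf_le hbdd hmem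
  have hS0 : 0 ≤ sInf S := le_csInf ⟨C₂, hmem⟩ fun c hc => by
    obtain ⟨X, _, rfl⟩ := hc
    exact lpNorm_nonneg p _
  -- uniform lower bound for the distance to low-rank matrices
  set Kc : ℝ := nr ^ (1/q) * nr ^ (1/q) / (nr * γ₁) with hKcdef
  have hKcpos : 0 < Kc := by
    rw [hKcdef]
    exact div_pos (mul_pos (Real.rpow_pos_of_pos hnr0 _) (Real.rpow_pos_of_pos hnr0 _))
      (mul_pos hnr0 hγ₁0)
  have hlower : ∀ X : Matrix (Fin (k+1)) (Fin (k+1)) ℝ, X.rank ≤ k →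
      Kc⁻¹ ≤ lpNorm p (A - X) := by
    intro X hX
    obtain ⟨z, hz0, hzX⟩ := exists_left_nullvec X hX
    set M : Matrix (Fin (k+1)) (Fin (k+1)) ℝ := A - X with hMdef
    set w : Fin (k+1) → ℝ := fun j => ∑ i, z i * M i j with hwdef
    have hwA : ∀ j, w j = ∑ i, z i * A i j := by
      intro j
      rw [hwdef]
      dsimp only
      rw [hMdef]
      simp only [Matrix.sub_apply, mul_sub]
      rw [Finset.sum_sub_distrib, hzX j, sub_zero]
    set Sw : ℝ := ∑ j, |w j| with hSwdef
    have hSw0 : 0 ≤ Sw := Finset.sum_nonneg fun j _ => abs_nonneg _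
    have hinv : ∀ i, ∑ j, H i j * w j = z i * d i * nr := by
      intro i
      calc ∑ j, H i j * w j = ∑ j, ∑ t, H i j * (z t * A t j) := by
            refine Finset.sum_congr rfl fun j _ => ?_
            rw [hwA j, Finset.mul_sum]
        _ = ∑ t, ∑ j, H i j * (z t * A t j) := Finset.sum_comm
        _ = ∑ t, (z t * d t) * ∑ j, H i j * H t j := by
            refine Finset.sum_congr rfl fun t _ => ?_
            rw [Finset.mul_sum]
            refine Finset.sum_congr rfl fun j _ => ?_
            rw [hAdef]
            dsimp only
            ring
        _ = ∑ t, (z t * d t) * (if i = t then nr else 0) := by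
            refine Finset.sum_congr rfl fun t _ => ?_
            rw [hH_orth_row i t]
        _ = ∑ t, (if i = t then z t * d t * nr else 0) := by
            refine Finset.sum_congr rfl fun t _ => ?_
            rw [mul_ite, mul_zero]
        _ = z i * d i * nr := by
            simp
    have hzbound : ∀ i, |z i| ≤ Sw / (nr * γ₁) := by
      intro i
      have h1 : |z i| * (d i * nr) ≤ Sw := by
        have h1a : |z i * d i * nr| ≤ Sw := by
          rw [← hinv i]
          calc |∑ j, H i j * w j| ≤ ∑ j, |H i j * w j| := Finset.abs_sum_le_sum_abs _ _
            _ = Sw := by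
              rw [hSwdef]
              refine Finset.sum_congr rfl fun j _ => ?_
              rw [abs_mul, habsH, one_mul]
        rw [abs_mul, abs_mul, abs_of_pos (hd_pos i), abs_of_pos hnr0, mul_assoc] at h1a
        exact h1a
      have h2 : (nr * γ₁) * |z i| ≤ Sw := by
        have h2a : nr * γ₁ ≤ d i * nr := by
          have := hd_ge i
          nlinarith
        nlinarith [abs_nonneg (z i)]
      rw [le_div_iff₀ (mul_pos hnr0 hγ₁0)]
      linarith
    set Z : ℝ := (∑ i, |z i| ^ q) ^ (1/q) with hZdef
    have hZpos : 0 < Z := by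
      obtain ⟨i, hi⟩ : ∃ i, z i ≠ 0 := by
        by_contra hc
        push_neg at hc
        exact hz0 (funext hc)
      apply Real.rpow_pos_of_pos
      have h1 : 0 < |z i| ^ q := Real.rpow_pos_of_pos (abs_pos.mpr hi) _
      exact lt_of_lt_of_le h1 (Finset.single_le_sum
        (fun i _ => Real.rpow_nonneg (abs_nonneg _) _) (Finset.mem_univ i))
    set L' : ℝ := lpNorm p M with hL'def
    have hL'0 : 0 ≤ L' := lpNorm_nonneg p M
    set cl : Fin (k+1) → ℝ := fun j => (∑ i, |M i j| ^ p) ^ (1/p) with hcldef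
    have hcl0 : ∀ j, 0 ≤ cl j := fun j => Real.rpow_nonneg
      (Finset.sum_nonneg fun i _ => Real.rpow_nonneg (abs_nonneg _) _) _
    have hwj : ∀ j, |w j| ≤ cl j * Z := by
      intro j
      have h0 := holder_abs hpq (fun i => M i j) z
      calc |w j| = |∑ i, M i j * z i| := by
            rw [hwdef]
            dsimp only
            congr 1
            exact Finset.sum_congr rfl fun i _ => mul_comm _ _
        _ ≤ cl j * Z := h0
    have hclsum : ∑ j, cl j ≤ L' * nr ^ (1/q) := by
      have h0 := Real.inner_le_Lp_mul_Lq Finset.univ cl (fun _ => (1:ℝ)) hpq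
      simp only [mul_one] at h0
      have h1 : (∑ j, |cl j| ^ p) ^ (1/p) = L' := by
        rw [hL'def, lpNorm]
        congr 1
        calc ∑ j, |cl j| ^ p = ∑ j, ∑ i, |M i j| ^ p := by
              refine Finset.sum_congr rfl fun j _ => ?_
              rw [abs_of_nonneg (hcl0 j), hcldef]
              dsimp only
              rw [← Real.rpow_mul (Finset.sum_nonneg fun i _ =>
                Real.rpow_nonneg (abs_nonneg _) _), one_div, inv_mul_cancel₀ hp0.ne',
                Real.rpow_one]
          _ = ∑ i, ∑ j, |M i j| ^ p := Finset.sum_comm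
      have h2 : (∑ _j : Fin (k+1), |(1:ℝ)| ^ q) ^ (1/q) = nr ^ (1/q) := by
        simp only [abs_one, Real.one_rpow]
        rw [Finset.sum_const, Finset.card_univ, Fintype.card_fin, nsmul_eq_mul, mul_one,
          hnrdef]
        push_cast
        ring_nf
      rw [h1, h2] at h0
      exact h0
    have hSwle : Sw ≤ L' * nr ^ (1/q) * Z := by
      calc Sw ≤ ∑ j, cl j * Z := Finset.sum_le_sum fun j _ => hwj j
        _ = (∑ j, cl j) * Z := (Finset.sum_mul _ _ _).symm
        _ ≤ L' * nr ^ (1/q) * Z :=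
            mul_le_mul_of_nonneg_right hclsum hZpos.le
    have hZle : Z ≤ nr ^ (1/q) * (Sw / (nr * γ₁)) := by
      have hdiv0 : 0 ≤ Sw / (nr * γ₁) := div_nonneg hSw0 (mul_pos hnr0 hγ₁0).le
      have h1 : ∑ i, |z i| ^ q ≤ nr * (Sw / (nr * γ₁)) ^ q := by
        calc ∑ i, |z i| ^ q ≤ ∑ _i : Fin (k+1), (Sw / (nr * γ₁)) ^ q :=
              Finset.sum_le_sum fun i _ =>
                Real.rpow_le_rpow (abs_nonneg _) (hzbound i) hq0.le
          _ = nr * (Sw / (nr * γ₁)) ^ q := by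
              rw [Finset.sum_const, Finset.card_univ, Fintype.card_fin, nsmul_eq_mul, hnrdef]
              push_cast
              ring
      calc Z ≤ (nr * (Sw / (nr * γ₁)) ^ q) ^ (1/q) := by
            rw [hZdef]
            exact Real.rpow_le_rpow (Finset.sum_nonneg fun i _ =>
              Real.rpow_nonneg (abs_nonneg _) _) h1 (by positivity)
        _ = nr ^ (1/q) * (Sw / (nr * γ₁)) := by
            rw [Real.mul_rpow hnr0.le (Real.rpow_nonneg hdiv0 _),
              ← Real.rpow_mul hdiv0, one_div, mul_inv_cancel₀ hq0.ne', Real.rpow_one]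
    have hfin : Z ≤ Z * (Kc * L') := by
      calc Z ≤ nr ^ (1/q) * (Sw / (nr * γ₁)) := hZle
        _ ≤ nr ^ (1/q) * ((L' * nr ^ (1/q) * Z) / (nr * γ₁)) := by
            apply mul_le_mul_of_nonneg_left _ (Real.rpow_pos_of_pos hnr0 _).le
            exact (div_le_div_iff_of_pos_right (mul_pos hnr0 hγ₁0)).mpr hSwle
        _ = Z * (Kc * L') := by
            rw [hKcdef]
            field_simp
    have h1K : 1 ≤ Kc * L' := (le_mul_iff_one_le_right hZpos).mp hfin
    rw [← hL'def] at *
    rw [inv_eq_one_div, div_le_iff₀ hKcpos]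
    linarith
  have hInfpos : 0 < sInf S := by
    refine lt_of_lt_of_le (inv_pos.mpr hKcpos) (le_csInf ⟨C₂, hmem⟩ ?_)
    intro c hc
    obtain ⟨X, hX, rfl⟩ := hc
    exact hlower X hX
  refine ⟨A, hInfpos, ?_⟩
  intro J hJ Y
  obtain ⟨j₀, hj₀⟩ : ∃ j₀ : Fin (k+1), ∀ m, J m ≠ j₀ := by
    have hns : ¬ Function.Surjective J := by
      intro hs
      have h1 := Fintype.card_le_of_surjective J hs
      simp only [Fintype.card_fin] at h1
      omega
    rw [Function.Surjective] at hns
    push_neg at hns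
    obtain ⟨b, hb⟩ := hns
    exact ⟨b, fun m => hb m⟩
  set M : Matrix (Fin (k+1)) (Fin (k+1)) ℝ := A - A.submatrix id J * Y with hMdef
  set z : Fin (k+1) → ℝ := fun i => (d i)⁻¹ * H i j₀ with hzdef
  have hzA : ∀ j, ∑ i, z i * A i j = if j₀ = j then nr else 0 := by
    intro j
    calc ∑ i, z i * A i j = ∑ i, H i j₀ * H i j := by
          refine Finset.sum_congr rfl fun i _ => ?_
          rw [hzdef, hAdef]
          dsimp only
          field_simp [(hd_pos i).ne']
        _ = if j₀ = j then nr else 0 := hH_orth j₀ j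
  have hzM : ∑ i, z i * M i j₀ = nr := by
    have expand : ∀ i, z i * M i j₀
        = z i * A i j₀ - ∑ m, z i * A i (J m) * Y m j₀ := by
      intro i
      rw [hMdef]
      simp only [Matrix.sub_apply, Matrix.mul_apply, Matrix.submatrix_apply, id_eq]
      rw [mul_sub, Finset.mul_sum]
      congr 1
      exact Finset.sum_congr rfl fun m _ => (mul_assoc _ _ _).symm
    rw [Finset.sum_congr rfl fun i _ => expand i, Finset.sum_sub_distrib]
    have h2 : ∑ i, ∑ m, z i * A i (J m) * Y m j₀ = 0 := by
      rw [Finset.sum_comm]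
      refine Finset.sum_eq_zero fun m _ => ?_
      have h3 : ∑ i, z i * A i (J m) = 0 := by
        rw [hzA (J m), if_neg (fun hh => hj₀ m hh.symm)]
      calc ∑ i, z i * A i (J m) * Y m j₀ = (∑ i, z i * A i (J m)) * Y m j₀ :=
            (Finset.sum_mul _ _ _).symm
        _ = 0 := by rw [h3, zero_mul]
    rw [h2, sub_zero, hzA j₀, if_pos rfl]
  have hzabs : ∀ i, |z i| = (d i)⁻¹ := by
    intro i
    rw [hzdef]
    dsimp only
    rw [abs_mul, habsH, mul_one, abs_of_pos (inv_pos.mpr (hd_pos i))]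
  set Zq : ℝ := (∑ i, |z i| ^ q) ^ (1/q) with hZqdef
  have hZqval : ∑ i, |z i| ^ q = γ⁻¹ ^ q + (k : ℝ) := by
    have h1 : ∀ i, |z i| ^ q = if i = i₀ then γ⁻¹ ^ q else 1 := by
      intro i
      rw [hzabs i, hddef]
      dsimp only
      split
      · rfl
      · rw [inv_one, Real.one_rpow]
    rw [Finset.sum_congr rfl fun i _ => h1 i,
      ← Finset.add_sum_erase Finset.univ _ (Finset.mem_univ i₀), if_pos rfl]
    congr 1
    rw [Finset.sum_congr rfl (fun i hi => if_neg (Finset.ne_of_mem_erase hi)),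
      Finset.sum_const, Finset.card_erase_of_mem (Finset.mem_univ i₀),
      Finset.card_univ, Fintype.card_fin]
    simp
  have hZqsumpos : 0 < ∑ i, |z i| ^ q := by
    rw [hZqval]
    have h0 : 0 < γ⁻¹ ^ q := Real.rpow_pos_of_pos (inv_pos.mpr hγ0) _
    linarith
  have hZqpos : 0 < Zq := Real.rpow_pos_of_pos hZqsumpos _
  have hHold : nr ≤ (∑ i, |M i j₀| ^ p) ^ (1/p) * Zq := by
    have h0 := holder_abs hpq (fun i => M i j₀) z
    have h1 : |∑ i, M i j₀ * z i| = nr := by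
      rw [show ∑ i, M i j₀ * z i = ∑ i, z i * M i j₀ from
        Finset.sum_congr rfl fun i _ => mul_comm _ _, hzM, abs_of_pos hnr0]
    rw [h1] at h0
    exact h0
  have hfinal : nr ≤ lpNorm p M * Zq :=
    le_trans hHold (mul_le_mul_of_nonneg_right (col_le_lpNorm hp0 M j₀) hZqpos.le)
  have e1 : C₂ = nr ^ (1/p) * γ := by
    rw [hC₂def, Real.mul_rpow hnr0.le (Real.rpow_nonneg hγ0.le _)]
    congr 1
    rw [← Real.rpow_mul hγ0.le, mul_one_div, div_self hp0.ne', Real.rpow_one]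
  have hγqpos : 0 < γ ^ q := Real.rpow_pos_of_pos hγ0 q
  have e2a : γ ^ q * (γ⁻¹ ^ q + (k:ℝ)) = ρ ^ q := by
    rw [Real.inv_rpow hγ0.le, mul_add, mul_inv_cancel₀ hγqpos.ne', hγq]
    field_simp
    ring
  have e2 : γ * ((γ⁻¹ ^ q + (k:ℝ)) ^ (1/q)) = ρ := by
    have h1 : (0:ℝ) ≤ γ⁻¹ ^ q + (k:ℝ) := by
      have h2 : (0:ℝ) ≤ γ⁻¹ ^ q := Real.rpow_nonneg (inv_nonneg.mpr hγ0.le) _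
      linarith
    calc γ * ((γ⁻¹ ^ q + (k:ℝ)) ^ (1/q))
        = (γ ^ q) ^ (1/q) * ((γ⁻¹ ^ q + (k:ℝ)) ^ (1/q)) := by
          congr 1
          rw [← Real.rpow_mul hγ0.le, mul_one_div, div_self hq0.ne', Real.rpow_one]
      _ = (γ ^ q * (γ⁻¹ ^ q + (k:ℝ))) ^ (1/q) := (Real.mul_rpow hγqpos.le h1).symm
      _ = (ρ ^ q) ^ (1/q) := by rw [e2a]
      _ = ρ := by rw [← Real.rpow_mul hρ0.le, mul_one_div, div_self hq0.ne', Real.rpow_one]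
  have hkey : β₀ * C₂ * Zq = nr := by
    rw [hZqdef, hZqval, e1]
    calc β₀ * (nr ^ (1/p) * γ) * ((γ⁻¹ ^ q + (k:ℝ)) ^ (1/q))
        = β₀ * nr ^ (1/p) * (γ * ((γ⁻¹ ^ q + (k:ℝ)) ^ (1/q))) := by ring
      _ = β₀ * nr ^ (1/p) * ρ := by rw [e2]
      _ = nr ^ (1/p) * nr ^ (1 - 1/p) := by
          rw [hρdef]
          field_simp
      _ = nr := by
          rw [← Real.rpow_add hnr0, show 1/p + (1 - 1/p) = 1 by ring, Real.rpow_one]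
  have hstep : β₀ * C₂ ≤ lpNorm p M := by
    have h1 : β₀ * C₂ * Zq ≤ lpNorm p M * Zq := by
      rw [hkey]
      exact hfinal
    exact le_of_mul_le_mul_right h1 hZqpos
  calc α * sInf S ≤ β₀ * sInf S := mul_le_mul_of_nonneg_right hαβ hS0
    _ ≤ β₀ * C₂ := mul_le_mul_of_nonneg_left hSle hβpos.le
    _ ≤ lpNorm p M := hstep
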